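/- Let P be an algebraically closed field and n ≥ 2. If a polynomial g ∈ P[x_1,…,x_n] has exactly the same zero set in the affine space P^n as the polynomial x_1·x_2 (i.e., for every point p ∈ P^n, g(p) = 0 if and only if p_1·p_2 = 0), then g = c·x_1^k·x_2^l for some nonzero c ∈ P and integers k, l ≥ 1. -/

import Mathlib

open MvPolynomial

private lemma mvPrimeX {R : Type*} [CommRing R] [IsDomain R] {n : ℕ}
    (i : Fin (n + 1)) : Prime (MvPolynomial.X i : MvPolynomial (Fin (n + 1)) R) := by
  classical
  rw [← MulEquiv.prime_iff (MvPolynomial.renameEquiv R (Equiv.swap i 0)).toMulEquiv]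
  have h1 : (MvPolynomial.renameEquiv R (Equiv.swap i 0)).toMulEquiv (MvPolynomial.X i)
      = (MvPolynomial.X 0 : MvPolynomial (Fin (n + 1)) R) := by
    simp [MvPolynomial.renameEquiv, Equiv.swap_apply_left]
  rw [h1, ← MulEquiv.prime_iff (MvPolynomial.finSuccEquiv R n).toMulEquiv]
  have h2 : (MvPolynomial.finSuccEquiv R n).toMulEquiv (MvPolynomial.X 0)
      = (Polynomial.X : Polynomial (MvPolynomial (Fin n) R)) := by
    simpa using MvPolynomial.finSuccEquiv_X_zero (R := R) (n := n)
  rw [h2]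
  exact Polynomial.prime_X

private lemma mvUnitEqC {R : Type*} [CommRing R] [IsDomain R] :
    ∀ {n : ℕ} (u : MvPolynomial (Fin n) R), IsUnit u → ∃ c : R, u = MvPolynomial.C c := by
  intro n
  induction n with
  | zero => intro u _; exact ⟨MvPolynomial.constantCoeff u, MvPolynomial.eq_C_of_isEmpty u⟩
  | succ m ih =>
    intro u hu
    have hu' : IsUnit ((MvPolynomial.finSuccEquiv R m) u) := hu.map _
    obtain ⟨r, hr, hru⟩ := Polynomial.isUnit_iff.mp hu'
    obtain ⟨c, rfl⟩ := ih r hr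
    refine ⟨c, ?_⟩
    have := congrArg (MvPolynomial.finSuccEquiv R m).symm hru
    rw [AlgEquiv.symm_apply_apply] at this
    rw [← this]
    have : (MvPolynomial.finSuccEquiv R m) (MvPolynomial.C c)
        = Polynomial.C (MvPolynomial.C c) := by
      simpa [MvPolynomial.algebraMap_eq, Polynomial.algebraMap_apply] using
        (MvPolynomial.finSuccEquiv R m).commutes c
    rw [← this, AlgEquiv.symm_apply_apply]

private lemma dvd_prime_pow_mul_prime_pow {A : Type*} [CommRing A] [IsDomain A]
    [UniqueFactorizationMonoid A] {p q : A} (hp : Prime p) (hq : Prime q) :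
    ∀ (i j : ℕ) (a : A), a ∣ p ^ i * q ^ j →
      ∃ (u : A) (k l : ℕ), IsUnit u ∧ a = u * p ^ k * q ^ l := by
  intro i
  induction i with
  | zero =>
    intro j a ha
    rw [pow_zero, one_mul] at ha
    obtain ⟨l, _, v, hv⟩ := (dvd_prime_pow hq j).mp ha
    exact ⟨(v⁻¹ : Aˣ), 0, l, Units.isUnit _, by
      rw [pow_zero, mul_one, ← hv, mul_comm a (v : A), Units.inv_mul_cancel_left]⟩
  | succ i ih =>
    intro j a ha
    by_cases hpa : p ∣ a
    · obtain ⟨b, rfl⟩ := hpa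
      rw [pow_succ, mul_comm (p ^ i) p, mul_assoc,
        mul_dvd_mul_iff_left hp.ne_zero] at ha
      obtain ⟨u, k, l, hu, rfl⟩ := ih j b ha
      exact ⟨u, k + 1, l, hu, by rw [pow_succ]; ring⟩
    · have hane : a ≠ 0 := fun h => hpa (h ▸ dvd_zero p)
      have haq : a ∣ q ^ j := by
        apply UniqueFactorizationMonoid.dvd_of_dvd_mul_left_of_no_prime_factors hane
          (fun d hda hdp hd => ?_) (by rwa [mul_comm] at ha)
        exact hpa (dvd_trans ((hd.dvd_prime_iff_associated hp).mp
          (hd.dvd_of_dvd_pow hdp)).symm.dvd hda)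
      obtain ⟨l, _, v, hv⟩ := (dvd_prime_pow hq j).mp haq
      exact ⟨(v⁻¹ : Aˣ), 0, l, Units.isUnit _, by
        rw [pow_zero, mul_one, ← hv, mul_comm a (v : A), Units.inv_mul_cancel_left]⟩

/-- Over an algebraically closed field, a polynomial in n ≥ 2
variables with exactly the same zero set as x_1·x_2 equals c·x_1^k·x_2^l
with c ≠ 0 and k, l ≥ 1. -/
theorem same_zero_set_as_x1x2 {P : Type*} [Field P] [IsAlgClosed P]
    (n : ℕ) (hn : 2 ≤ n) (g : MvPolynomial (Fin n) P)
    (hzero : ∀ p : Fin n → P,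
      MvPolynomial.eval p g = 0 ↔ p ⟨0, by omega⟩ * p ⟨1, by omega⟩ = 0) :
    ∃ c : P, c ≠ 0 ∧ ∃ k l : ℕ, 1 ≤ k ∧ 1 ≤ l ∧
      g = MvPolynomial.C c * MvPolynomial.X ⟨0, by omega⟩ ^ k *
            MvPolynomial.X ⟨1, by omega⟩ ^ l := by
  classical
  obtain ⟨m, rfl⟩ : ∃ m, n = m + 1 := ⟨n - 1, by omega⟩
  set i0 : Fin (m + 1) := ⟨0, by omega⟩
  set i1 : Fin (m + 1) := ⟨1, by omega⟩
  have hi01 : i0 ≠ i1 := by simp [i0, i1, Fin.ext_iff]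
  -- step 1 : X i0 * X i1 ∈ radical (span {g})
  have hmem : (MvPolynomial.X i0 * MvPolynomial.X i1 : MvPolynomial (Fin (m + 1)) P) ∈
      (Ideal.span {g}).radical := by
    rw [← MvPolynomial.vanishingIdeal_zeroLocus_eq_radical (K := P)]
    intro x hx
    have hgx : MvPolynomial.eval x g = 0 := hx g (Ideal.subset_span rfl)
    have := (hzero x).mp hgx
    simpa using this
  obtain ⟨N, hN⟩ := hmem
  rw [Ideal.mem_span_singleton] at hN
  rw [mul_pow] at hN
  -- step 2 : factor g
  have hprime0 : Prime (MvPolynomial.X i0 : MvPolynomial (Fin (m + 1)) P) := mvPrimeX i0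
  have hprime1 : Prime (MvPolynomial.X i1 : MvPolynomial (Fin (m + 1)) P) := mvPrimeX i1
  obtain ⟨u, k, l, hu, hg⟩ := dvd_prime_pow_mul_prime_pow hprime0 hprime1 N N g hN
  obtain ⟨c, rfl⟩ := mvUnitEqC u hu
  have hc : c ≠ 0 := by
    intro h
    subst h
    rw [map_zero] at hu
    exact hu.ne_zero rfl
  -- step 3 : k ≥ 1 and l ≥ 1 by evaluating
  have hk : 1 ≤ k := by
    by_contra h
    have hk0 : k = 0 := by omega
    set x : Fin (m + 1) → P := fun j => if j = i0 then 0 else 1 with hxdef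
    have hx0 : x i0 = 0 := by simp [x]
    have hx1 : x i1 = 1 := by simp [x, (Ne.symm hi01)]
    have : MvPolynomial.eval x g = 0 := (hzero x).mpr (by rw [hx0]; ring)
    rw [hg, hk0] at this
    simp [hx0, hx1] at this
    exact hc this
  have hl : 1 ≤ l := by
    by_contra h
    have hl0 : l = 0 := by omega
    set x : Fin (m + 1) → P := fun j => if j = i1 then 0 else 1 with hxdef
    have hx1 : x i1 = 0 := by simp [x]
    have hx0 : x i0 = 1 := by simp [x, hi01]
    have : MvPolynomial.eval x g = 0 := (hzero x).mpr (by
      show x i0 * x i1 = 0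
      rw [hx1]; ring)
    rw [hg, hl0] at this
    simp [hx0, hx1] at this
    exact hc this
  exact ⟨c, hc, k, l, hk, hl, hg⟩
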